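/- Explicit m-vector for a fixed-direction qubit Hamiltonian: let H(θ) = B(sin θ σ₁ + cos θ σ₃) with B ≠ 0 and U(θ) = exp(−i t H(θ)). Then the Bloch vector of M_θ = i U(θ)† ∂_θU(θ), defined by (m_θ)_k = ½ Tr(σ_k M_θ), equals sin(Bt)·(cos θ cos(Bt), −sin(Bt), −sin θ cos(Bt)); in particular ‖m_θ‖² = sin²(Bt). -/

import Mathlib

open Matrix Complex

attribute [local instance] Matrix.frobeniusNormedAddCommGroup Matrix.frobeniusNormedSpace

noncomputable section

def σ1 : Matrix (Fin 2) (Fin 2) ℂ := !![0, 1; 1, 0]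
def σ2 : Matrix (Fin 2) (Fin 2) ℂ := !![0, -Complex.I; Complex.I, 0]
def σ3 : Matrix (Fin 2) (Fin 2) ℂ := !![1, 0; 0, -1]

lemma pyth (x : ℝ) : ((Real.sin x : ℂ))^2 + ((Real.cos x : ℂ))^2 = 1 := by
  exact_mod_cast congrArg (fun r : ℝ => (r : ℂ)) (Real.sin_sq_add_cos_sq x)

set_option maxHeartbeats 1000000 in
lemma exp_formula (B t θ : ℝ) :
    NormedSpace.exp ((-(Complex.I * (t:ℂ) * (B:ℂ))) •
      ((Real.sin θ : ℂ) • σ1 + (Real.cos θ : ℂ) • σ3)) =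
    ((Real.cos (B*t) : ℂ)) • (1 : Matrix (Fin 2) (Fin 2) ℂ)
      + (-(Complex.I * (Real.sin (B*t):ℂ) * (Real.sin θ:ℂ))) • σ1
      + (-(Complex.I * (Real.sin (B*t):ℂ) * (Real.cos θ:ℂ))) • σ3 := by
  set sθ := (Real.sin θ : ℂ)
  set cθ := (Real.cos θ : ℂ)
  have hpy : sθ^2 + cθ^2 = 1 := pyth θ
  set P : Matrix (Fin 2) (Fin 2) ℂ := !![(1+cθ)/2, sθ/2; sθ/2, (1-cθ)/2] with hP
  set Q : Matrix (Fin 2) (Fin 2) ℂ := !![(1-cθ)/2, -(sθ/2); -(sθ/2), (1+cθ)/2] with hQ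
  have hPQ1 : P + Q = 1 := by
    ext i j; fin_cases i <;> fin_cases j <;>
      simp [hP, hQ, Matrix.one_apply] <;> ring
  have hPP : P * P = P := by
    ext i j; fin_cases i <;> fin_cases j <;>
      simp [hP, Matrix.mul_apply, Fin.sum_univ_two] <;> (first | ring1 | linear_combination (1/4 : ℂ) * hpy | linear_combination (-1/4 : ℂ) * hpy)
  have hQQ : Q * Q = Q := by
    ext i j; fin_cases i <;> fin_cases j <;>
      simp [hQ, Matrix.mul_apply, Fin.sum_univ_two] <;> (first | ring1 | linear_combination (1/4 : ℂ) * hpy | linear_combination (-1/4 : ℂ) * hpy)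
  have hPQ : P * Q = 0 := by
    ext i j; fin_cases i <;> fin_cases j <;>
      simp [hP, hQ, Matrix.mul_apply, Fin.sum_univ_two] <;> (first | ring1 | linear_combination (1/4 : ℂ) * hpy | linear_combination (-1/4 : ℂ) * hpy)
  have hQP : Q * P = 0 := by
    ext i j; fin_cases i <;> fin_cases j <;>
      simp [hP, hQ, Matrix.mul_apply, Fin.sum_univ_two] <;> (first | ring1 | linear_combination (1/4 : ℂ) * hpy | linear_combination (-1/4 : ℂ) * hpy)
  have hN : sθ • σ1 + cθ • σ3 = P - Q := by
    ext i j; fin_cases i <;> fin_cases j <;>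
      simp [hP, hQ, σ1, σ3] <;> ring
  let φ : (ℂ × ℂ) →ₐ[ℂ] Matrix (Fin 2) (Fin 2) ℂ :=
  { toFun := fun p => p.1 • P + p.2 • Q
    map_one' := by simpa using hPQ1
    map_mul' := fun p q => by
      show (p.1 * q.1) • P + (p.2 * q.2) • Q = (p.1 • P + p.2 • Q) * (q.1 • P + q.2 • Q)
      simp only [Matrix.add_mul, Matrix.smul_mul, Matrix.mul_add, Matrix.mul_smul,
        hPP, hQQ, hPQ, hQP, smul_zero, add_zero, zero_add, smul_add, smul_smul]
      rw [mul_comm q.1 p.1, mul_comm q.2 p.2]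
    map_zero' := by show (0:ℂ) • P + (0:ℂ) • Q = 0; simp
    map_add' := fun p q => by
      show (p.1 + q.1) • P + (p.2 + q.2) • Q = _
      rw [add_smul, add_smul]; abel
    commutes' := fun r => by
      show ((algebraMap ℂ (ℂ × ℂ)) r).1 • P + ((algebraMap ℂ (ℂ × ℂ)) r).2 • Q = _
      rw [Prod.algebraMap_apply]
      show r • P + r • Q = _
      rw [← smul_add, hPQ1, Algebra.algebraMap_eq_smul_one] }
  letI : NormedRing (Matrix (Fin 2) (Fin 2) ℂ) := Matrix.frobeniusNormedRing
  letI : NormedAlgebra ℂ (Matrix (Fin 2) (Fin 2) ℂ) := Matrix.frobeniusNormedAlgebra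
  have hcont : Continuous φ := by
    show Continuous fun p : ℂ × ℂ => p.1 • P + p.2 • Q
    exact (continuous_fst.smul continuous_const).add (continuous_snd.smul continuous_const)
  have harg : (-(Complex.I * (t:ℂ) * (B:ℂ))) • (sθ • σ1 + cθ • σ3)
      = φ (-(Complex.I * (t:ℂ) * (B:ℂ)), Complex.I * (t:ℂ) * (B:ℂ)) := by
    show _ = (-(Complex.I * (t:ℂ) * (B:ℂ))) • P + (Complex.I * (t:ℂ) * (B:ℂ)) • Q
    rw [hN, smul_sub]
    module
  have key := NormedSpace.map_exp φ hcont (-(Complex.I * (t:ℂ) * (B:ℂ)), Complex.I * (t:ℂ) * (B:ℂ))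
  rw [harg]
  refine Eq.trans key.symm ?_
  have hexp : NormedSpace.exp (-(Complex.I * (t:ℂ) * (B:ℂ)), Complex.I * (t:ℂ) * (B:ℂ))
      = (Complex.exp (-(Complex.I * (t:ℂ) * (B:ℂ))), Complex.exp (Complex.I * (t:ℂ) * (B:ℂ))) := by
    rw [Complex.exp_eq_exp_ℂ]
    exact Prod.ext (Prod.fst_exp _) (Prod.snd_exp _)
  rw [hexp]
  have e1 : Complex.exp (-(Complex.I * (t:ℂ) * (B:ℂ)))
      = (Real.cos (B*t) : ℂ) - Complex.I * (Real.sin (B*t) : ℂ) := by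
    rw [show -(Complex.I * (t:ℂ) * (B:ℂ)) = ((-(B*t) : ℝ) : ℂ) * Complex.I by push_cast; ring,
      Complex.exp_mul_I, ← Complex.ofReal_cos, ← Complex.ofReal_sin, Real.cos_neg, Real.sin_neg]
    push_cast
    ring
  have e2 : Complex.exp (Complex.I * (t:ℂ) * (B:ℂ))
      = (Real.cos (B*t) : ℂ) + Complex.I * (Real.sin (B*t) : ℂ) := by
    rw [show Complex.I * (t:ℂ) * (B:ℂ) = (((B*t) : ℝ) : ℂ) * Complex.I by push_cast; ring,
      Complex.exp_mul_I, ← Complex.ofReal_cos, ← Complex.ofReal_sin]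
    push_cast
    ring
  show Complex.exp _ • P + Complex.exp _ • Q = _
  rw [e1, e2]
  ext i j; fin_cases i <;> fin_cases j <;>
    simp [hP, hQ, σ1, σ3, Matrix.one_apply] <;> ring

lemma hasDeriv_E (B t θ : ℝ) :
    HasDerivAt (fun x : ℝ => ((Real.cos (B*t) : ℂ)) • (1 : Matrix (Fin 2) (Fin 2) ℂ)
      + (-(Complex.I * (Real.sin (B*t):ℂ) * (Real.sin x:ℂ))) • σ1
      + (-(Complex.I * (Real.sin (B*t):ℂ) * (Real.cos x:ℂ))) • σ3)
    ((-(Complex.I * (Real.sin (B*t):ℂ) * (Real.cos θ:ℂ))) • σ1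
      + ((Complex.I * (Real.sin (B*t):ℂ) * (Real.sin θ:ℂ))) • σ3) θ := by
  have h1 : HasDerivAt (fun x : ℝ => -(Complex.I * (Real.sin (B*t):ℂ) * (Real.sin x:ℂ)))
      (-(Complex.I * (Real.sin (B*t):ℂ) * (Real.cos θ:ℂ))) θ := by
    have := ((Real.hasDerivAt_sin θ).ofReal_comp).const_mul (-(Complex.I * (Real.sin (B*t):ℂ)))
    rw [show (fun x : ℝ => -(Complex.I * (Real.sin (B*t):ℂ) * (Real.sin x:ℂ))) = fun y => -(Complex.I * (Real.sin (B*t):ℂ)) * (Real.sin y:ℂ) by funext x; ring]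
    exact this.congr_deriv (by ring)
  have h2 : HasDerivAt (fun x : ℝ => -(Complex.I * (Real.sin (B*t):ℂ) * (Real.cos x:ℂ)))
      ((Complex.I * (Real.sin (B*t):ℂ) * (Real.sin θ:ℂ))) θ := by
    have := ((Real.hasDerivAt_cos θ).ofReal_comp).const_mul (-(Complex.I * (Real.sin (B*t):ℂ)))
    rw [show (fun x : ℝ => -(Complex.I * (Real.sin (B*t):ℂ) * (Real.cos x:ℂ))) = fun y => -(Complex.I * (Real.sin (B*t):ℂ)) * (Real.cos y:ℂ) by funext x; ring]
    exact this.congr_deriv (by push_cast; ring)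
  have := ((hasDerivAt_const θ (((Real.cos (B*t) : ℂ)) • (1 : Matrix (Fin 2) (Fin 2) ℂ))).add
    (h1.smul_const σ1)).add (h2.smul_const σ3)
  exact this.congr_deriv (by simp)

def pauli : Fin 3 → Matrix (Fin 2) (Fin 2) ℂ := ![σ1, σ2, σ3]

/-- `σ · a` for a real 3-vector `a`. -/
def sdot (a : Fin 3 → ℝ) : Matrix (Fin 2) (Fin 2) ℂ :=
  (a 0 : ℂ) • σ1 + (a 1 : ℂ) • σ2 + (a 2 : ℂ) • σ3

theorem m_vector_fixed_direction (B t : ℝ) (hB : B ≠ 0)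
    (U : ℝ → Matrix (Fin 2) (Fin 2) ℂ)
    (hU : ∀ θ : ℝ, U θ = NormedSpace.exp
      ((-(Complex.I * (t : ℂ) * (B : ℂ))) •
        ((Real.sin θ : ℂ) • σ1 + (Real.cos θ : ℂ) • σ3)))
    (θ : ℝ)
    (M : Matrix (Fin 2) (Fin 2) ℂ)
    (hM : M = Complex.I • ((U θ)ᴴ * deriv U θ))
    (mθ : Fin 3 → ℝ)
    (hmθ : mθ = ![Real.sin (B * t) * (Real.cos θ * Real.cos (B * t)),
                  Real.sin (B * t) * (-Real.sin (B * t)),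
                  Real.sin (B * t) * (-Real.sin θ * Real.cos (B * t))]) :
    (∀ k : Fin 3, (1 / 2 : ℂ) * (pauli k * M).trace = ((mθ k : ℝ) : ℂ)) ∧
    mθ ⬝ᵥ mθ = Real.sin (B * t) ^ 2 := by
  have hUE : U = fun x : ℝ => ((Real.cos (B*t) : ℂ)) • (1 : Matrix (Fin 2) (Fin 2) ℂ)
      + (-(Complex.I * (Real.sin (B*t):ℂ) * (Real.sin x:ℂ))) • σ1
      + (-(Complex.I * (Real.sin (B*t):ℂ) * (Real.cos x:ℂ))) • σ3 :=
    funext fun x => (hU x).trans (exp_formula B t x)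
  have hdU : deriv U θ = (-(Complex.I * (Real.sin (B*t):ℂ) * (Real.cos θ:ℂ))) • σ1
      + ((Complex.I * (Real.sin (B*t):ℂ) * (Real.sin θ:ℂ))) • σ3 := by
    rw [hUE]; exact (hasDeriv_E B t θ).deriv
  constructor
  · intro k
    subst hmθ hM
    rw [hdU, hUE]
    have hI := Complex.I_sq
    fin_cases k <;>
      simp [pauli, σ1, σ2, σ3, Matrix.trace, Matrix.mul_apply, Fin.sum_univ_two,
        Matrix.conjTranspose_apply, Matrix.one_apply, Matrix.diag, Complex.star_def,
        ← Complex.ofReal_sin, ← Complex.ofReal_cos,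
        Complex.conj_ofReal, _root_.map_mul, map_neg, Complex.conj_I]
    · linear_combination (-((Real.sin (B*t):ℂ)) * (Real.cos (B*t):ℂ) * (Real.cos θ:ℂ)) * hI
    · linear_combination (-((Real.sin (B*t):ℂ))^2) * pyth θ +
        (-(((Real.sin (B*t):ℂ))^2 * (((Real.sin θ:ℂ))^2 + ((Real.cos θ:ℂ))^2) * (Complex.I^2 - 1))) * hI
    · linear_combination ((Real.cos (B*t):ℂ) * (Real.sin (B*t):ℂ) * (Real.sin θ:ℂ)) * hI
  · subst hmθ
    have h1 := Real.sin_sq_add_cos_sq θ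
    have h2 := Real.sin_sq_add_cos_sq (B*t)
    simp [dotProduct, Fin.sum_univ_three]
    linear_combination (Real.sin (B*t)^2 * Real.cos (B*t)^2) * h1 + (Real.sin (B*t)^2) * h2
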